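/- arXiv:0912.5419 — 3 statements merged into one kernel-verified Lean document; each statement's English description precedes it below -/
import Mathlib

section
/- Let β ∈ [0,1] and let x = (a, ζ, θ) : ℝ → ℝ³ be a differentiable function satisfying for all t ∈ ℝ the system (5.1): a'(t) = -a(t) + β² sin²(ζ(t)) sin(θ(t)), ζ'(t) = sin²(ζ(t)), θ'(t) = a(t). Suppose |a(t)| ≤ 2 for all t ∈ ℝ and ζ(0) ∈ [0, π/2]. Then |a(0)| ≤ sin²(ζ(0)). -/
open Real Filter Set

lemma sinsq_le_abs (x : ℝ) : sin x ^ 2 ≤ |x| := by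
  have h1 : |sin x| ≤ 1 := abs_le.2 ⟨Real.neg_one_le_sin x, Real.sin_le_one x⟩
  have h2 : |sin x| ≤ |x| := Real.abs_sin_le_abs
  calc sin x ^ 2 = |sin x| * |sin x| := by rw [← sq_abs, sq]
    _ ≤ 1 * |x| := mul_le_mul h1 h2 (abs_nonneg _) zero_le_one
    _ = |x| := one_mul _

/-- Property (1) of Lemma 5.1: any full orbit of the system (5.1) with
`a`-component bounded by 2 and `ζ 0 ∈ [0, π/2]` satisfies `|a 0| ≤ sin² (ζ 0)`. -/
theorem stmt0 (β : ℝ) (hβ : β ∈ Set.Icc (0 : ℝ) 1)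
    (a ζ θ : ℝ → ℝ)
    (ha : Differentiable ℝ a) (hζ : Differentiable ℝ ζ) (hθ : Differentiable ℝ θ)
    (hda : ∀ t, deriv a t = -a t + β ^ 2 * sin (ζ t) ^ 2 * sin (θ t))
    (hdζ : ∀ t, deriv ζ t = sin (ζ t) ^ 2)
    (hdθ : ∀ t, deriv θ t = a t)
    (hbound : ∀ t, |a t| ≤ 2)
    (hζ0 : ζ 0 ∈ Set.Icc (0 : ℝ) (π / 2)) :
    |a 0| ≤ sin (ζ 0) ^ 2 := by
  obtain ⟨hζ0l, hζ0u⟩ := hζ0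
  -- ζ is monotone
  have hζmono : Monotone ζ :=
    monotone_of_deriv_nonneg hζ (fun t => by rw [hdζ]; positivity)
  -- Step A: ζ(t) ≥ 0 for t ≤ 0
  have hA : ∀ t ≤ 0, 0 ≤ ζ t := by
    intro s hs
    by_contra hneg
    push_neg at hneg
    obtain ⟨s', hs', hζs'⟩ : ∃ s' ∈ Icc s 0, ζ s' = 0 :=
      intermediate_value_Icc hs hζ.continuous.continuousOn ⟨hneg.le, hζ0l⟩
    -- χ(t) = e^t ζ(t) is antitone on [s, s'] since ζ ≤ 0 there
    have key : AntitoneOn (fun t => Real.exp t * ζ t) (Icc s s') := by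
      apply antitoneOn_of_deriv_nonpos (convex_Icc _ _)
        (Real.continuous_exp.mul hζ.continuous).continuousOn
        (fun t _ => ((Real.differentiable_exp t).mul (hζ t)).differentiableWithinAt)
      intro t ht
      rw [interior_Icc] at ht
      have hζt : ζ t ≤ 0 := hζs' ▸ hζmono ht.2.le
      have hder : deriv (fun t => Real.exp t * ζ t) t
          = Real.exp t * (sin (ζ t) ^ 2 + ζ t) := by
        rw [deriv_fun_mul (Real.differentiable_exp t) (hζ t), Real.deriv_exp, hdζ]
        ring
      rw [show (Real.exp * ζ) = fun t => Real.exp t * ζ t from rfl, hder]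
      have : sin (ζ t) ^ 2 ≤ -ζ t := by
        have := sinsq_le_abs (ζ t)
        rwa [abs_of_nonpos hζt] at this
      nlinarith [Real.exp_pos t]
    have h1 : Real.exp s' * ζ s' ≤ Real.exp s * ζ s :=
      key (left_mem_Icc.2 hs'.1) (right_mem_Icc.2 hs'.1) hs'.1
    rw [hζs', mul_zero] at h1
    nlinarith [Real.exp_pos s]
  -- Step B: sin²(ζ t) ≤ sin²(ζ 0) for t ≤ 0
  have hB : ∀ t ≤ 0, sin (ζ t) ^ 2 ≤ sin (ζ 0) ^ 2 := by
    intro t ht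
    have h1 : 0 ≤ ζ t := hA t ht
    have h2 : ζ t ≤ ζ 0 := hζmono ht
    have hsin1 : 0 ≤ sin (ζ t) := Real.sin_nonneg_of_nonneg_of_le_pi h1
      (h2.trans (hζ0u.trans (by linarith [Real.pi_pos])))
    have hsin2 : sin (ζ t) ≤ sin (ζ 0) := by
      apply Real.strictMonoOn_sin.monotoneOn ?_ ?_ h2
      · constructor <;> [linarith; linarith]
      · constructor <;> [linarith; linarith]
    exact pow_le_pow_left₀ hsin1 hsin2 2
  set M := sin (ζ 0) ^ 2 with hM
  have hM0 : 0 ≤ M := sq_nonneg _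
  -- the forcing term is bounded by M on (-∞, 0]
  have hforce : ∀ t ≤ 0, |β ^ 2 * sin (ζ t) ^ 2 * sin (θ t)| ≤ M := by
    intro t ht
    have h1 : |β ^ 2| ≤ 1 := by
      rw [abs_of_nonneg (sq_nonneg β)]; nlinarith [hβ.1, hβ.2]
    have h2 : |sin (θ t)| ≤ 1 := abs_le.2 ⟨Real.neg_one_le_sin _, Real.sin_le_one _⟩
    calc |β ^ 2 * sin (ζ t) ^ 2 * sin (θ t)|
        = |β ^ 2| * |sin (ζ t) ^ 2| * |sin (θ t)| := by rw [abs_mul, abs_mul]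
      _ ≤ 1 * |sin (ζ t) ^ 2| * 1 := by
          apply mul_le_mul (mul_le_mul h1 le_rfl (abs_nonneg _) zero_le_one) h2
            (abs_nonneg _) (by positivity)
      _ = sin (ζ t) ^ 2 := by rw [one_mul, mul_one, abs_of_nonneg (sq_nonneg _)]
      _ ≤ M := hB t ht
  -- main estimate: for every T ≤ 0, |a 0| ≤ M + 2 exp T
  have hmain : ∀ T ≤ (0 : ℝ), |a 0| ≤ M + 2 * Real.exp T := by
    intro T hT
    have hdg : ∀ t, deriv (fun t => Real.exp t * a t) t
        = Real.exp t * (β ^ 2 * sin (ζ t) ^ 2 * sin (θ t)) := by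
      intro t
      rw [deriv_fun_mul (Real.differentiable_exp t) (ha t), Real.deriv_exp, hda]
      ring
    -- upper bound: e^t a t - M e^t is antitone on [T,0]
    have hup : AntitoneOn (fun t => Real.exp t * a t - M * Real.exp t) (Icc T 0) := by
      apply antitoneOn_of_deriv_nonpos (convex_Icc _ _)
        ((Real.continuous_exp.mul ha.continuous).sub
          (continuous_const.mul Real.continuous_exp)).continuousOn
        (fun t _ => (((Real.differentiable_exp t).mul (ha t)).sub
          ((differentiable_const M t).mul (Real.differentiable_exp t))).differentiableWithinAt)
      intro t ht
      rw [interior_Icc] at ht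
      rw [deriv_sub (((Real.differentiable_exp t).mul (ha t))) 
        ((differentiable_const M t).mul (Real.differentiable_exp t)),
        show (Real.exp * a) = fun t => Real.exp t * a t from rfl,
        show ((fun _ => M) * Real.exp) = fun t => M * Real.exp t from rfl, hdg,
        deriv_const_mul _ (Real.differentiable_exp t), Real.deriv_exp]
      have := hforce t ht.2.le
      have h1 : β ^ 2 * sin (ζ t) ^ 2 * sin (θ t) ≤ M := (abs_le.1 this).2
      nlinarith [Real.exp_pos t]
    -- lower bound: e^t a t + M e^t is monotone on [T,0]
    have hlo : MonotoneOn (fun t => Real.exp t * a t + M * Real.exp t) (Icc T 0) := by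
      apply monotoneOn_of_deriv_nonneg (convex_Icc _ _)
        ((Real.continuous_exp.mul ha.continuous).add
          (continuous_const.mul Real.continuous_exp)).continuousOn
        (fun t _ => (((Real.differentiable_exp t).mul (ha t)).add
          ((differentiable_const M t).mul (Real.differentiable_exp t))).differentiableWithinAt)
      intro t ht
      rw [interior_Icc] at ht
      rw [deriv_add (((Real.differentiable_exp t).mul (ha t)))
        ((differentiable_const M t).mul (Real.differentiable_exp t)),
        show (Real.exp * a) = fun t => Real.exp t * a t from rfl,
        show ((fun _ => M) * Real.exp) = fun t => M * Real.exp t from rfl, hdg,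
        deriv_const_mul _ (Real.differentiable_exp t), Real.deriv_exp]
      have := hforce t ht.2.le
      have h1 : -M ≤ β ^ 2 * sin (ζ t) ^ 2 * sin (θ t) := (abs_le.1 this).1
      nlinarith [Real.exp_pos t]
    have hTmem : T ∈ Icc T (0:ℝ) := left_mem_Icc.2 hT
    have h0mem : (0:ℝ) ∈ Icc T (0:ℝ) := right_mem_Icc.2 hT
    have hupv := hup hTmem h0mem hT
    have hlov := hlo hTmem h0mem hT
    simp only [Real.exp_zero, one_mul, mul_one] at hupv hlov
    have haT := abs_le.1 (hbound T)
    have hET := Real.exp_pos T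
    rw [abs_le]
    constructor
    · -- a 0 + M ≥ exp T a T + M exp T ≥ -2 exp T
      nlinarith
    · nlinarith
  -- conclude by letting T → -∞
  refine le_of_forall_pos_le_add fun ε hε => ?_
  have hT : min 0 (Real.log (ε / 2)) ≤ 0 := min_le_left _ _
  have := hmain _ hT
  have hexp : Real.exp (min 0 (Real.log (ε / 2))) ≤ ε / 2 := by
    calc Real.exp (min 0 (Real.log (ε / 2))) ≤ Real.exp (Real.log (ε / 2)) :=
      Real.exp_le_exp.2 (min_le_right _ _)
    _ = ε / 2 := Real.exp_log (by linarith)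
  linarith
end

section
/- Let β ∈ [0,1] and let x = (a, ζ, θ) : ℝ → ℝ³ be a differentiable function satisfying for all t ∈ ℝ the system (5.1): a'(t) = -a(t) + β² sin²(ζ(t)) sin(θ(t)), ζ'(t) = sin²(ζ(t)), θ'(t) = a(t). Suppose |a(t)| ≤ 2 for all t ∈ ℝ and ζ(0) ∈ [0, π). Then there exists θ* ∈ ℝ such that (a(t), ζ(t), θ(t)) → (0, 0, θ*) as t → -∞. -/
open Real Filter Set Topology

/-- Property (2) of Lemma 5.1: a full bounded orbit of (5.1) with `ζ 0 ∈ [0, π)`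
converges in backward time to a fixed point `(0, 0, θ*)` on the circle `Γ`. -/
theorem stmt1 (β : ℝ) (hβ : β ∈ Set.Icc (0 : ℝ) 1)
    (a ζ θ : ℝ → ℝ)
    (ha : Differentiable ℝ a) (hζ : Differentiable ℝ ζ) (hθ : Differentiable ℝ θ)
    (hda : ∀ t, deriv a t = -a t + β ^ 2 * sin (ζ t) ^ 2 * sin (θ t))
    (hdζ : ∀ t, deriv ζ t = sin (ζ t) ^ 2)
    (hdθ : ∀ t, deriv θ t = a t)
    (hbound : ∀ t, |a t| ≤ 2)
    (hζ0 : ζ 0 ∈ Set.Ico (0 : ℝ) π) :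
    ∃ θstar : ℝ,
      Tendsto (fun t => (a t, ζ t, θ t)) atBot (nhds ((0 : ℝ), (0 : ℝ), θstar)) := by
  obtain ⟨hβ0, hβ1⟩ := hβ
  have hβ2 : β ^ 2 ≤ 1 := by nlinarith
  have haD : ∀ t, HasDerivAt a (-a t + β ^ 2 * sin (ζ t) ^ 2 * sin (θ t)) t := fun t => by
    have h := (ha t).hasDerivAt
    rwa [hda t] at h
  have hζD : ∀ t, HasDerivAt ζ (sin (ζ t) ^ 2) t := fun t => by
    have h := (hζ t).hasDerivAt
    rwa [hdζ t] at h
  have hθD : ∀ t, HasDerivAt θ (a t) t := fun t => by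
    have h := (hθ t).hasDerivAt
    rwa [hdθ t] at h
  -- ζ is monotone
  have hmono : Monotone ζ := monotone_of_deriv_nonneg hζ (fun t => by rw [hdζ t]; positivity)
  -- ζ is nonnegative
  have hζnn : ∀ t, 0 ≤ ζ t := by
    have key : ∀ t ≤ (0:ℝ), 0 ≤ ζ t := by
      intro t1 ht1
      by_contra hneg
      push_neg at hneg
      obtain ⟨t2, ht2mem, ht2⟩ : ∃ t2 ∈ Icc t1 0, ζ t2 = 0 := by
        have h := intermediate_value_Icc ht1 hζ.continuous.continuousOn
        have h0 : (0:ℝ) ∈ Icc (ζ t1) (ζ 0) := ⟨le_of_lt hneg, hζ0.1⟩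
        obtain ⟨t2, h1, h2⟩ := h h0
        exact ⟨t2, h1, h2⟩
      -- Gronwall backward uniqueness: ζ(t1) = 0
      have hab : (0:ℝ) ≤ t2 - t1 := by linarith [ht2mem.1]
      have hg := norm_le_gronwallBound_of_norm_deriv_right_le
        (f := fun s => ζ (t2 - s)) (f' := fun s => -(sin (ζ (t2 - s)) ^ 2))
        (δ := 0) (K := 1) (ε := 0) (a := 0) (b := t2 - t1)
        (hζ.continuous.comp (continuous_const.sub continuous_id)).continuousOn
        (fun x _ => by
          have h1 : HasDerivAt (fun s => t2 - s) (-1 : ℝ) x := by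
            simpa using (hasDerivAt_id x).const_sub t2
          have h2 := (hζD (t2 - x)).comp x h1
          have h3 : sin (ζ (t2 - x)) ^ 2 * (-1) = -(sin (ζ (t2 - x)) ^ 2) := by ring
          rw [h3] at h2
          exact h2.hasDerivWithinAt)
        (by simp [ht2])
        (fun x _ => by
          have h1 : |sin (ζ (t2 - x))| ≤ |ζ (t2 - x)| := abs_sin_le_abs
          have h2 : |sin (ζ (t2 - x))| ≤ 1 := abs_sin_le_one _
          have h3 : ‖-(sin (ζ (t2 - x)) ^ 2)‖ = |sin (ζ (t2 - x))| ^ 2 := by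
            rw [norm_neg, Real.norm_eq_abs, abs_pow, sq_abs, ← sq_abs]
          rw [h3, Real.norm_eq_abs]
          nlinarith [abs_nonneg (sin (ζ (t2 - x))), abs_nonneg (ζ (t2 - x))])
      have hfin := hg (t2 - t1) ⟨hab, le_refl _⟩
      rw [gronwallBound_ε0_δ0] at hfin
      simp only [Real.norm_eq_abs] at hfin
      have h4 : t2 - (t2 - t1) = t1 := by ring
      rw [h4] at hfin
      have : ζ t1 = 0 := abs_eq_zero.mp (le_antisymm hfin (abs_nonneg _))
      linarith
    intro t
    rcases le_total t 0 with h | h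
    · exact key t h
    · exact le_trans (key 0 le_rfl) (hmono h)
  have hbdd : BddBelow (range ζ) := ⟨0, by rintro _ ⟨t, rfl⟩; exact hζnn t⟩
  set L := ⨅ t, ζ t with hLdef
  have hLtend : Tendsto ζ atBot (𝓝 L) := tendsto_atBot_ciInf hmono hbdd
  have hL0 : 0 ≤ L := le_ciInf hζnn
  have hLle : L ≤ ζ 0 := ciInf_le hbdd 0
  -- L = 0
  have hLzero : L = 0 := by
    by_contra hne
    have hLpos : 0 < L := lt_of_le_of_ne hL0 (Ne.symm hne)
    have hLπ : L < π := lt_of_le_of_lt hLle hζ0.2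
    have hsinL : 0 < sin L := sin_pos_of_pos_of_lt_pi hLpos hLπ
    set c := sin L ^ 2 / 2 with hc
    have hcpos : 0 < c := by positivity
    have htend2 : Tendsto (fun t => sin (ζ t) ^ 2) atBot (𝓝 (sin L ^ 2)) :=
      ((Real.continuous_sin.tendsto L).comp hLtend).pow 2
    have hev : ∀ᶠ t in atBot, c < sin (ζ t) ^ 2 ∧ t ≤ (0:ℝ) :=
      (htend2.eventually (eventually_gt_nhds (by nlinarith))).and (eventually_le_atBot 0)
    obtain ⟨T, hT⟩ := eventually_atBot.mp hev
    -- ψ = ζ - c t is monotone on Iic T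
    have hψ : MonotoneOn (fun t => ζ t - c * t) (Iic T) := by
      apply monotoneOn_of_deriv_nonneg (convex_Iic T)
      · exact (hζ.sub (differentiable_const c |>.mul differentiable_id)).continuous.continuousOn
      · exact (hζ.sub (differentiable_const c |>.mul differentiable_id)).differentiableOn
      · intro x hx
        rw [interior_Iic] at hx
        have hd : HasDerivAt (fun t => ζ t - c * t) (sin (ζ x) ^ 2 - c * 1) x :=
          (hζD x).sub ((hasDerivAt_id x).const_mul c)
        rw [hd.deriv]
        have := (hT x (le_of_lt hx)).1
        linarith
    have hdivnn : 0 ≤ ζ T / c := div_nonneg (hζnn T) (le_of_lt hcpos)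
    have ht0T : T - ζ T / c - 1 ≤ T := by linarith
    have hcomp := hψ (mem_Iic.mpr ht0T) (mem_Iic.mpr le_rfl) ht0T
    simp only at hcomp
    have hexp : c * (T - ζ T / c - 1) = c * T - ζ T - c := by
      field_simp
    have hfin : ζ (T - ζ T / c - 1) ≤ -c := by linarith [hcomp, hexp]
    linarith [hζnn (T - ζ T / c - 1), hcpos]
  have hζtend : Tendsto ζ atBot (𝓝 0) := hLzero ▸ hLtend
  -- bound on a in the far past
  have ha_small : ∀ T ≤ (0:ℝ), ∀ t ≤ T, |a t| ≤ ζ T ^ 2 := by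
    intro T hT t htT
    set ε := ζ T ^ 2 with hε
    have hεnn : 0 ≤ ε := sq_nonneg _
    -- the forcing term is bounded by ε on Iic T
    have hf_bound : ∀ u ≤ T, |β ^ 2 * sin (ζ u) ^ 2 * sin (θ u)| ≤ ε := by
      intro u hu
      have h1 : |sin (ζ u)| ≤ |ζ u| := abs_sin_le_abs
      have h2 : ζ u ≤ ζ T := hmono hu
      have h3 : 0 ≤ ζ u := hζnn u
      have h4 : sin (ζ u) ^ 2 ≤ ζ T ^ 2 := by
        have : |ζ u| = ζ u := abs_of_nonneg h3
        nlinarith [abs_nonneg (sin (ζ u)), sq_abs (sin (ζ u))]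
      have h5 : |sin (θ u)| ≤ 1 := abs_sin_le_one _
      have h6 : 0 ≤ sin (ζ u) ^ 2 := sq_nonneg _
      rw [abs_mul, abs_mul, abs_of_nonneg (sq_nonneg β), abs_of_nonneg h6]
      calc β ^ 2 * sin (ζ u) ^ 2 * |sin (θ u)| ≤ 1 * (ζ T ^ 2) * 1 := by
            apply mul_le_mul _ h5 (abs_nonneg _) (by positivity)
            nlinarith [sq_nonneg β]
        _ = ε := by rw [hε]; ring
    -- G and H monotone on Iic T
    have hGmono : MonotoneOn (fun u => Real.exp u * (ε - a u)) (Iic T) := by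
      apply monotoneOn_of_deriv_nonneg (convex_Iic T)
      · exact (Real.continuous_exp.mul (continuous_const.sub ha.continuous)).continuousOn
      · exact (Real.differentiable_exp.mul ((differentiable_const ε).sub ha)).differentiableOn
      · intro x hx
        rw [interior_Iic] at hx
        have hd : HasDerivAt (fun u => Real.exp u * (ε - a u))
            (Real.exp x * (ε - a x) + Real.exp x * (0 - (-a x + β ^ 2 * sin (ζ x) ^ 2 * sin (θ x)))) x :=
          (Real.hasDerivAt_exp x).mul ((hasDerivAt_const x ε).sub (haD x))
        rw [hd.deriv]
        have hb := hf_bound x (le_of_lt hx)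
        have := abs_le.mp hb
        have hex := Real.exp_pos x
        nlinarith [this.1, this.2]
    have hHmono : MonotoneOn (fun u => Real.exp u * (ε + a u)) (Iic T) := by
      apply monotoneOn_of_deriv_nonneg (convex_Iic T)
      · exact (Real.continuous_exp.mul (continuous_const.add ha.continuous)).continuousOn
      · exact (Real.differentiable_exp.mul ((differentiable_const ε).add ha)).differentiableOn
      · intro x hx
        rw [interior_Iic] at hx
        have hd : HasDerivAt (fun u => Real.exp u * (ε + a u))
            (Real.exp x * (ε + a x) + Real.exp x * (0 + (-a x + β ^ 2 * sin (ζ x) ^ 2 * sin (θ x)))) x :=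
          (Real.hasDerivAt_exp x).mul ((hasDerivAt_const x ε).add (haD x))
        rw [hd.deriv]
        have hb := hf_bound x (le_of_lt hx)
        have := abs_le.mp hb
        have hex := Real.exp_pos x
        nlinarith [this.1, this.2]
    -- a t ≤ ε + 2 exp (s - t) for all s ≤ t
    have key : ∀ s ≤ t, a t ≤ ε + 2 * Real.exp (s - t) ∧ -a t ≤ ε + 2 * Real.exp (s - t) := by
      intro s hs
      have hsT : s ≤ T := le_trans hs htT
      have hG := hGmono (mem_Iic.mpr hsT) (mem_Iic.mpr htT) hs
      have hH := hHmono (mem_Iic.mpr hsT) (mem_Iic.mpr htT) hs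
      simp only at hG hH
      have habs := abs_le.mp (hbound s)
      have hes := Real.exp_pos s
      have het := Real.exp_pos t
      have hexp : Real.exp (s - t) * Real.exp t = Real.exp s := by
        rw [← Real.exp_add]; ring_nf
      constructor
      · nlinarith [hG, habs.1, habs.2]
      · nlinarith [hH, habs.1, habs.2]
    have choose_s : ∀ δ : ℝ, 0 < δ → ∃ s ≤ t, Real.exp (s - t) ≤ δ / 4 := by
      intro δ hδpos
      refine ⟨min t (t + Real.log (δ / 4)), min_le_left _ _, ?_⟩
      rcases le_total (Real.log (δ / 4)) 0 with h | h
      · have hs_eq : min t (t + Real.log (δ / 4)) = t + Real.log (δ / 4) :=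
          min_eq_right (by linarith)
        rw [hs_eq]
        have heq : t + Real.log (δ / 4) - t = Real.log (δ / 4) := by ring
        rw [heq, Real.exp_log (by positivity)]
      · have hs_eq : min t (t + Real.log (δ / 4)) = t := min_eq_left (by linarith)
        rw [hs_eq]
        simp only [sub_self, Real.exp_zero]
        have h2 := Real.exp_le_exp.mpr h
        rw [Real.exp_zero, Real.exp_log (by positivity)] at h2
        linarith
    have h1 : a t ≤ ε := by
      by_contra hcon
      push_neg at hcon
      obtain ⟨s, hst, hexp_le⟩ := choose_s (a t - ε) (by linarith)
      have := (key s hst).1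
      linarith
    have h2 : -a t ≤ ε := by
      by_contra hcon
      push_neg at hcon
      obtain ⟨s, hst, hexp_le⟩ := choose_s (-a t - ε) (by linarith)
      have := (key s hst).2
      linarith
    exact abs_le.mpr ⟨by linarith, h1⟩
  -- a → 0
  have hatend : Tendsto a atBot (𝓝 0) := by
    rw [Metric.tendsto_nhds]
    intro ε hε
    have hsq : Tendsto (fun T => ζ T ^ 2) atBot (𝓝 0) := by
      have := hζtend.pow 2
      simpa using this
    have hev : ∀ᶠ T in atBot, ζ T ^ 2 < ε ∧ T ≤ (0:ℝ) :=
      (hsq.eventually (gt_mem_nhds hε)).and (eventually_le_atBot 0)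
    obtain ⟨T, hT1, hT2⟩ := hev.exists
    filter_upwards [eventually_le_atBot T] with t ht
    rw [Real.dist_eq, sub_zero]
    exact lt_of_le_of_lt (ha_small T hT2 t ht) hT1
  -- monotone combinations for θ
  have hupD : ∀ t, HasDerivAt (fun t => ζ t + (θ t + a t))
      (sin (ζ t) ^ 2 + (a t + (-a t + β ^ 2 * sin (ζ t) ^ 2 * sin (θ t)))) t :=
    fun t => (hζD t).add ((hθD t).add (haD t))
  have hdownD : ∀ t, HasDerivAt (fun t => ζ t - (θ t + a t))
      (sin (ζ t) ^ 2 - (a t + (-a t + β ^ 2 * sin (ζ t) ^ 2 * sin (θ t)))) t :=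
    fun t => (hζD t).sub ((hθD t).add (haD t))
  have hsinb : ∀ t, -1 ≤ β ^ 2 * sin (θ t) ∧ β ^ 2 * sin (θ t) ≤ 1 := by
    intro t
    have h1 := neg_one_le_sin (θ t)
    have h2 := sin_le_one (θ t)
    have h3 := mul_le_mul_of_nonneg_left h1 (sq_nonneg β)
    have h4 := mul_le_mul_of_nonneg_left h2 (sq_nonneg β)
    constructor <;> nlinarith [h3, h4]
  have hup : Monotone (fun t => ζ t + (θ t + a t)) := by
    apply monotone_of_deriv_nonneg (hζ.add (hθ.add ha))
    intro t
    rw [show deriv (ζ + (θ + a)) t = _ from (hupD t).deriv]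
    have h := (hsinb t).1
    nlinarith [sq_nonneg (sin (ζ t))]
  have hdown : Monotone (fun t => ζ t - (θ t + a t)) := by
    apply monotone_of_deriv_nonneg (hζ.sub (hθ.add ha))
    intro t
    rw [show deriv (ζ - (θ + a)) t = _ from (hdownD t).deriv]
    have h := (hsinb t).2
    nlinarith [sq_nonneg (sin (ζ t))]
  -- bounded below
  have hbdd1 : BddBelow (range (fun t => ζ t + (θ t + a t))) := by
    refine ⟨min (ζ 0 + (θ 0 + a 0)) (-(ζ 0 - (θ 0 + a 0))), ?_⟩
    rintro _ ⟨t, rfl⟩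
    rcases le_total t 0 with h | h
    · have h1 : ζ t - (θ t + a t) ≤ ζ 0 - (θ 0 + a 0) := hdown h
      have h2 : 0 ≤ ζ t := hζnn t
      have : -(ζ 0 - (θ 0 + a 0)) ≤ ζ t + (θ t + a t) := by linarith
      exact le_trans (min_le_right _ _) this
    · exact le_trans (min_le_left _ _) (hup h)
  have hbdd2 : BddBelow (range (fun t => ζ t - (θ t + a t))) := by
    refine ⟨min (ζ 0 - (θ 0 + a 0)) (-(ζ 0 + (θ 0 + a 0))), ?_⟩
    rintro _ ⟨t, rfl⟩
    rcases le_total t 0 with h | h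
    · have h1 : ζ t + (θ t + a t) ≤ ζ 0 + (θ 0 + a 0) := hup h
      have h2 : 0 ≤ ζ t := hζnn t
      have : -(ζ 0 + (θ 0 + a 0)) ≤ ζ t - (θ t + a t) := by linarith
      exact le_trans (min_le_right _ _) this
    · exact le_trans (min_le_left _ _) (hdown h)
  set l1 := ⨅ t, (ζ t + (θ t + a t)) with hl1
  set l2 := ⨅ t, (ζ t - (θ t + a t)) with hl2
  have htend1 : Tendsto (fun t => ζ t + (θ t + a t)) atBot (𝓝 l1) :=
    tendsto_atBot_ciInf hup hbdd1
  have htend2 : Tendsto (fun t => ζ t - (θ t + a t)) atBot (𝓝 l2) :=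
    tendsto_atBot_ciInf hdown hbdd2
  refine ⟨(l1 - l2) / 2, ?_⟩
  have hθtend : Tendsto θ atBot (𝓝 ((l1 - l2) / 2)) := by
    have h := ((htend1.sub htend2).div_const 2).sub hatend
    have heq : (fun t => ((ζ t + (θ t + a t)) - (ζ t - (θ t + a t))) / 2 - a t) = θ := by
      funext t; ring
    rw [heq] at h
    rwa [sub_zero] at h
  exact hatend.prodMk_nhds (hζtend.prodMk_nhds hθtend)
end

section
/- Let β ∈ [0,1] and let (a, ζ, θ) : ℝ → ℝ³ be a differentiable function satisfying a'(t) = -a(t) + β² sin²(ζ(t)) sin(θ(t)), ζ'(t) = sin²(ζ(t)), θ'(t) = a(t) for all t. Define u(t) = a(t) - sin²(ζ(t)) and v(t) = a(t) + sin²(ζ(t)). Then for every t with ζ(t) ∈ [0, π/2], one has u'(t) ≤ -u(t) and v'(t) ≥ -v(t). -/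
open Real

/-- The differential-inequality step in the proof of property (1) of Lemma 5.1:
`u = a - sin² ζ` satisfies `u' ≤ -u` and `v = a + sin² ζ` satisfies `v' ≥ -v`
whenever `ζ(t) ∈ [0, π/2]`. -/
theorem stmt3 (β : ℝ) (hβ : β ∈ Set.Icc (0 : ℝ) 1)
    (a ζ θ : ℝ → ℝ)
    (ha : Differentiable ℝ a) (hζ : Differentiable ℝ ζ) (hθ : Differentiable ℝ θ)
    (hda : ∀ t, deriv a t = -a t + β ^ 2 * sin (ζ t) ^ 2 * sin (θ t))
    (hdζ : ∀ t, deriv ζ t = sin (ζ t) ^ 2)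
    (hdθ : ∀ t, deriv θ t = a t) :
    ∀ t, ζ t ∈ Set.Icc (0 : ℝ) (π / 2) →
      deriv (fun s => a s - sin (ζ s) ^ 2) t ≤ -(a t - sin (ζ t) ^ 2) ∧
      deriv (fun s => a s + sin (ζ s) ^ 2) t ≥ -(a t + sin (ζ t) ^ 2) := by
  intro t ht
  have hsa : HasDerivAt a (deriv a t) t := (ha t).hasDerivAt
  have hsz : HasDerivAt ζ (sin (ζ t) ^ 2) t := by
    have := (hζ t).hasDerivAt
    rwa [hdζ t] at this
  have hs2 : HasDerivAt (fun s => sin (ζ s) ^ 2)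
      (2 * sin (ζ t) * cos (ζ t) * sin (ζ t) ^ 2) t := by
    have h1 : HasDerivAt (fun s => sin (ζ s)) (cos (ζ t) * sin (ζ t) ^ 2) t :=
      (Real.hasDerivAt_sin (ζ t)).comp t hsz
    have h2 : HasDerivAt (fun s => sin (ζ s) ^ 2)
        (((2 : ℕ) : ℝ) * sin (ζ t) ^ (2 - 1) * (cos (ζ t) * sin (ζ t) ^ 2)) t := h1.fun_pow 2
    convert h2 using 1
    ring
  have hd1 : deriv (fun s => a s - sin (ζ s) ^ 2) t =
      deriv a t - 2 * sin (ζ t) * cos (ζ t) * sin (ζ t) ^ 2 :=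
    (hsa.sub hs2).deriv
  have hd2 : deriv (fun s => a s + sin (ζ s) ^ 2) t =
      deriv a t + 2 * sin (ζ t) * cos (ζ t) * sin (ζ t) ^ 2 :=
    (hsa.add hs2).deriv
  obtain ⟨hβ0, hβ1⟩ := hβ
  obtain ⟨hz0, hz1⟩ := ht
  have hsin : 0 ≤ sin (ζ t) := Real.sin_nonneg_of_nonneg_of_le_pi hz0
    (le_trans hz1 (by linarith [Real.pi_pos]))
  have hcos : 0 ≤ cos (ζ t) := Real.cos_nonneg_of_mem_Icc ⟨by linarith [Real.pi_pos], hz1⟩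
  have hβ2 : β ^ 2 ≤ 1 := by nlinarith
  have hβ20 : 0 ≤ β ^ 2 := sq_nonneg β
  have hsθ : sin (θ t) ≤ 1 := Real.sin_le_one _
  have hsθ' : -1 ≤ sin (θ t) := Real.neg_one_le_sin _
  have hs2nn : 0 ≤ sin (ζ t) ^ 2 := sq_nonneg _
  have key1 : β ^ 2 * sin (ζ t) ^ 2 * sin (θ t) ≤ sin (ζ t) ^ 2 := by
    have h : β ^ 2 * sin (θ t) ≤ 1 :=
      le_trans (mul_le_of_le_one_right hβ20 hsθ) hβ2
    nlinarith
  have key2 : -(sin (ζ t) ^ 2) ≤ β ^ 2 * sin (ζ t) ^ 2 * sin (θ t) := by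
    have h : -1 ≤ β ^ 2 * sin (θ t) := by nlinarith
    nlinarith
  have key3 : 0 ≤ 2 * sin (ζ t) * cos (ζ t) * sin (ζ t) ^ 2 := by positivity
  constructor
  · rw [hd1, hda t]; linarith
  · rw [hd2, hda t]; linarith
end
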